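/- There exists C > 0 such that for all η = (η₁,η₂,η₃) ∈ ℝ³ with η ≠ 0 and 3η₁² ≠ η₂²+η₃², and for each j = 1, 2, 3: |A_j(η)| ≤ C (η₁²+η₂²+η₃²)^{3/2}(3η₁²−η₂²−η₃²)^{−2}, and |∂_{η_j}A_j(η)| ≤ C [ (η₁²+η₂²+η₃²)(3η₁²−η₂²−η₃²)^{−2} + (η₁²+η₂²+η₃²)² |3η₁²−η₂²−η₃²|^{−3} ]. -/

import Mathlib

noncomputable section

/-- p(η) = (η₁²+η₂²+η₃²)(3η₁²−η₂²−η₃²)². -/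
def pZK (η₁ η₂ η₃ : ℝ) : ℝ :=
  (η₁ ^ 2 + η₂ ^ 2 + η₃ ^ 2) * (3 * η₁ ^ 2 - η₂ ^ 2 - η₃ ^ 2) ^ 2

def A0ZK (η₁ η₂ η₃ : ℝ) : ℝ :=
  (9 * η₁ ^ 4 + 30 * η₁ ^ 2 * (η₂ ^ 2 + η₃ ^ 2) + 5 * (η₂ ^ 2 + η₃ ^ 2) ^ 2)
    / (3 * pZK η₁ η₂ η₃)

def A1ZK (η₁ η₂ η₃ : ℝ) : ℝ :=
  -(η₁ * (9 * η₁ ^ 4 + 18 * η₁ ^ 2 * (η₂ ^ 2 + η₃ ^ 2) + (η₂ ^ 2 + η₃ ^ 2) ^ 2))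
    / (3 * pZK η₁ η₂ η₃)

def A2ZK (η₁ η₂ η₃ : ℝ) : ℝ :=
  -(4 * η₂ * (η₂ ^ 2 + η₃ ^ 2) * (3 * η₁ ^ 2 + η₂ ^ 2 + η₃ ^ 2)) / (3 * pZK η₁ η₂ η₃)

def A3ZK (η₁ η₂ η₃ : ℝ) : ℝ :=
  -(4 * η₃ * (η₂ ^ 2 + η₃ ^ 2) * (3 * η₁ ^ 2 + η₂ ^ 2 + η₃ ^ 2)) / (3 * pZK η₁ η₂ η₃)

def B01ZK (η₁ η₂ η₃ : ℝ) : ℝ := -(4 * η₁ * (η₂ ^ 2 + η₃ ^ 2)) / pZK η₁ η₂ η₃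

def B02ZK (η₁ η₂ η₃ : ℝ) : ℝ :=
  -(2 * η₂ * (3 * η₁ ^ 2 + η₂ ^ 2 + η₃ ^ 2)) / (3 * pZK η₁ η₂ η₃)

def B03ZK (η₁ η₂ η₃ : ℝ) : ℝ :=
  -(2 * η₃ * (3 * η₁ ^ 2 + η₂ ^ 2 + η₃ ^ 2)) / (3 * pZK η₁ η₂ η₃)

def B11ZK (η₁ η₂ η₃ : ℝ) : ℝ := 4 * η₁ ^ 2 * (η₂ ^ 2 + η₃ ^ 2) / pZK η₁ η₂ η₃

def B12ZK (η₁ η₂ η₃ : ℝ) : ℝ :=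
  2 * η₁ * η₂ * (3 * η₁ ^ 2 + η₂ ^ 2 + η₃ ^ 2) / (3 * pZK η₁ η₂ η₃)

def B13ZK (η₁ η₂ η₃ : ℝ) : ℝ :=
  2 * η₁ * η₃ * (3 * η₁ ^ 2 + η₂ ^ 2 + η₃ ^ 2) / (3 * pZK η₁ η₂ η₃)

def B21ZK (η₁ η₂ η₃ : ℝ) : ℝ := 4 * η₁ * η₂ * (η₂ ^ 2 + η₃ ^ 2) / pZK η₁ η₂ η₃

def B31ZK (η₁ η₂ η₃ : ℝ) : ℝ := 4 * η₁ * η₃ * (η₂ ^ 2 + η₃ ^ 2) / pZK η₁ η₂ η₃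

def B22ZK (η₁ η₂ η₃ : ℝ) : ℝ :=
  2 * (η₂ ^ 2 + η₃ ^ 2) * (3 * η₁ ^ 2 + η₂ ^ 2 + η₃ ^ 2) / (3 * pZK η₁ η₂ η₃)

def B32ZK (η₁ η₂ η₃ : ℝ) : ℝ :=
  2 * (η₂ ^ 2 + η₃ ^ 2) * (3 * η₁ ^ 2 + η₂ ^ 2 + η₃ ^ 2) / (3 * pZK η₁ η₂ η₃)

def C21ZK (η₁ η₂ η₃ : ℝ) : ℝ :=
  -(2 * η₃ * (3 * η₁ ^ 2 + η₂ ^ 2 + η₃ ^ 2)) / (3 * pZK η₁ η₂ η₃)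

def C31ZK (η₁ η₂ η₃ : ℝ) : ℝ :=
  -(2 * η₂ * (3 * η₁ ^ 2 + η₂ ^ 2 + η₃ ^ 2)) / (3 * pZK η₁ η₂ η₃)

def C22ZK (η₁ η₂ η₃ : ℝ) : ℝ :=
  2 * η₂ * (3 * η₁ ^ 2 + η₂ ^ 2 + η₃ ^ 2) / (3 * pZK η₁ η₂ η₃)

def C32ZK (η₁ η₂ η₃ : ℝ) : ℝ :=
  2 * η₃ * (3 * η₁ ^ 2 + η₂ ^ 2 + η₃ ^ 2) / (3 * pZK η₁ η₂ η₃)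

-- derivative formula for A1 in first variable
lemma hasDerivAt_A1aux (b c x : ℝ) (hr : 0 < x^2+b^2+c^2) (hq : 3*x^2-b^2-c^2 ≠ 0) :
    HasDerivAt (fun s => A1ZK s b c)
      (((-((9*x^4 + 18*x^2*(b^2+c^2) + (b^2+c^2)^2) + x*(36*x^3 + 36*x*(b^2+c^2))))
          * (3*((x^2+b^2+c^2)*(3*x^2-b^2-c^2)^2))
        - (-(x * (9*x^4 + 18*x^2*(b^2+c^2) + (b^2+c^2)^2)))
          * (3*(2*x*(3*x^2-b^2-c^2)^2 + (x^2+b^2+c^2)*(2*(3*x^2-b^2-c^2)*(6*x)))))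
        / (3*((x^2+b^2+c^2)*(3*x^2-b^2-c^2)^2))^2) x := by
  have hnum : HasDerivAt
      (fun s : ℝ => -(s * (9*s^4 + 18*s^2*(b^2+c^2) + (b^2+c^2)^2)))
      (-((9*x^4 + 18*x^2*(b^2+c^2) + (b^2+c^2)^2) + x*(36*x^3 + 36*x*(b^2+c^2)))) x := by
    have h4 : HasDerivAt (fun s : ℝ => 9*s^4 + 18*s^2*(b^2+c^2) + (b^2+c^2)^2)
        (36*x^3 + 36*x*(b^2+c^2)) x := by
      have a1 := (hasDerivAt_pow 4 x).const_mul 9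
      have a2 := ((hasDerivAt_pow 2 x).const_mul 18).mul_const (b^2+c^2)
      have := (a1.add a2).add_const ((b^2+c^2)^2)
      refine this.congr_deriv ?_
      push_cast; ring
    have := ((hasDerivAt_id x).mul h4).neg
    simp only [id_eq] at this
    refine this.congr_deriv ?_
    ring
  have hden : HasDerivAt (fun s : ℝ => 3 * ((s^2+b^2+c^2)*(3*s^2-b^2-c^2)^2))
      (3*(2*x*(3*x^2-b^2-c^2)^2 + (x^2+b^2+c^2)*(2*(3*x^2-b^2-c^2)*(6*x)))) x := by
    have h1 : HasDerivAt (fun s : ℝ => s^2 + b^2 + c^2) (2*x) x := by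
      simpa [add_assoc] using ((hasDerivAt_pow 2 x).add_const (b^2+c^2))
    have h3 : HasDerivAt (fun s : ℝ => 3*s^2 - b^2 - c^2) (3*(2*x)) x := by
      simpa using (((hasDerivAt_pow 2 x).const_mul 3).sub_const (b^2)).sub_const (c^2)
    have := (h1.mul (h3.pow 2)).const_mul 3
    refine this.congr_deriv ?_
    push_cast [Pi.pow_apply]; ring
  have hden0 : (3*((x^2+b^2+c^2)*(3*x^2-b^2-c^2)^2)) ≠ 0 := by
    refine mul_ne_zero (by norm_num) (mul_ne_zero (ne_of_gt hr) (pow_ne_zero 2 hq))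
  have := hnum.div hden hden0
  exact this

lemma hasDerivAt_A2aux (a c x : ℝ) (hr : 0 < a^2+x^2+c^2) (hq : 3*a^2-x^2-c^2 ≠ 0) :
    HasDerivAt (fun s => A2ZK a s c)
      (((-((4*(x^2+c^2) + 4*x*(2*x))*(3*a^2+x^2+c^2) + 4*x*(x^2+c^2)*(2*x)))
          * (3*((a^2+x^2+c^2)*(3*a^2-x^2-c^2)^2))
        - (-(4*x*(x^2+c^2)*(3*a^2+x^2+c^2)))
          * (3*(2*x*(3*a^2-x^2-c^2)^2 + (a^2+x^2+c^2)*(2*(3*a^2-x^2-c^2)*(-(2*x))))))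
        / (3*((a^2+x^2+c^2)*(3*a^2-x^2-c^2)^2))^2) x := by
  have hk : HasDerivAt (fun s : ℝ => s^2 + c^2) (2*x) x := by
    simpa using (hasDerivAt_pow 2 x).add_const (c^2)
  have hnum : HasDerivAt (fun s : ℝ => -(4*s*(s^2+c^2)*(3*a^2+s^2+c^2)))
      (-((4*(x^2+c^2) + 4*x*(2*x))*(3*a^2+x^2+c^2) + 4*x*(x^2+c^2)*(2*x))) x := by
    have hm : HasDerivAt (fun s : ℝ => 3*a^2 + s^2 + c^2) (2*x) x := by
      simpa using ((hasDerivAt_pow 2 x).const_add (3*a^2)).add_const (c^2)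
    have h4 : HasDerivAt (fun s : ℝ => 4*s) 4 x := by
      simpa using (hasDerivAt_id x).const_mul 4
    have := (((h4.mul hk).mul hm)).neg
    exact this
  have hden : HasDerivAt (fun s : ℝ => 3 * ((a^2+s^2+c^2)*(3*a^2-s^2-c^2)^2))
      (3*(2*x*(3*a^2-x^2-c^2)^2 + (a^2+x^2+c^2)*(2*(3*a^2-x^2-c^2)*(-(2*x))))) x := by
    have h1 : HasDerivAt (fun s : ℝ => a^2 + s^2 + c^2) (2*x) x := by
      simpa using ((hasDerivAt_pow 2 x).const_add (a^2)).add_const (c^2)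
    have h3 : HasDerivAt (fun s : ℝ => 3*a^2 - s^2 - c^2) (-(2*x)) x := by
      simpa using (((hasDerivAt_pow 2 x).const_sub (3*a^2))).sub_const (c^2)
    have := (h1.mul (h3.pow 2)).const_mul 3
    refine this.congr_deriv ?_
    push_cast [Pi.pow_apply]; ring
  have hden0 : (3*((a^2+x^2+c^2)*(3*a^2-x^2-c^2)^2)) ≠ 0 :=
    mul_ne_zero (by norm_num) (mul_ne_zero (ne_of_gt hr) (pow_ne_zero 2 hq))
  have := hnum.div hden hden0
  exact this

lemma aux_absA1 (a b c : ℝ) (hr : 0 < a^2+b^2+c^2) (hq : 3*a^2-b^2-c^2 ≠ 0) :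
    |A1ZK a b c| ≤ 1000 * (a^2+b^2+c^2) ^ ((3:ℝ)/2) * ((3*a^2-b^2-c^2)^2)⁻¹ := by
  set t := Real.sqrt (a^2+b^2+c^2) with hts
  have ht : 0 ≤ t := Real.sqrt_nonneg _
  have ht2 : t^2 = a^2+b^2+c^2 := Real.sq_sqrt hr.le
  have ha : |a| ≤ t := by
    rw [hts, ← Real.sqrt_sq_eq_abs]; exact Real.sqrt_le_sqrt (by nlinarith [sq_nonneg b, sq_nonneg c])
  have hq2 : 0 < (3*a^2-b^2-c^2)^2 := pow_two_pos_of_ne_zero hq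
  have hrpow : (a^2+b^2+c^2) ^ ((3:ℝ)/2) = t * (a^2+b^2+c^2) := by
    rw [show ((3:ℝ)/2) = 1/2 + 1 by norm_num, Real.rpow_add hr, Real.rpow_one, hts,
      Real.sqrt_eq_rpow]
  rw [hrpow, A1ZK, pZK, abs_div,
    abs_of_pos (show (0:ℝ) < 3*((a^2+b^2+c^2)*(3*a^2-b^2-c^2)^2) by positivity),
    div_le_iff₀ (by positivity)]
  have heq : 1000*(t*(a^2+b^2+c^2))*((3*a^2-b^2-c^2)^2)⁻¹*(3*((a^2+b^2+c^2)*(3*a^2-b^2-c^2)^2))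
      = 3000*t*(a^2+b^2+c^2)^2 := by
    rw [show 1000*(t*(a^2+b^2+c^2))*((3*a^2-b^2-c^2)^2)⁻¹*(3*((a^2+b^2+c^2)*(3*a^2-b^2-c^2)^2))
        = 3000*t*(a^2+b^2+c^2)^2 * (((3*a^2-b^2-c^2)^2)⁻¹ * (3*a^2-b^2-c^2)^2) by ring,
      inv_mul_cancel₀ hq2.ne', mul_one]
  rw [heq, abs_neg, abs_mul,
    abs_of_nonneg (show (0:ℝ) ≤ 9*a^4+18*a^2*(b^2+c^2)+(b^2+c^2)^2 by positivity)]
  have hN : 9*a^4+18*a^2*(b^2+c^2)+(b^2+c^2)^2 ≤ 28*(a^2+b^2+c^2)^2 := by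
    nlinarith [sq_nonneg a, sq_nonneg b, sq_nonneg c, sq_nonneg (b^2+c^2), sq_nonneg (a*b), sq_nonneg (a*c)]
  calc |a| * (9*a^4+18*a^2*(b^2+c^2)+(b^2+c^2)^2) ≤ t * (28*(a^2+b^2+c^2)^2) :=
        mul_le_mul ha hN (by positivity) ht
    _ ≤ 3000*t*(a^2+b^2+c^2)^2 := by nlinarith [mul_nonneg ht (sq_nonneg (a^2+b^2+c^2))]

lemma aux_absA2 (a b c : ℝ) (hr : 0 < a^2+b^2+c^2) (hq : 3*a^2-b^2-c^2 ≠ 0) :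
    |A2ZK a b c| ≤ 1000 * (a^2+b^2+c^2) ^ ((3:ℝ)/2) * ((3*a^2-b^2-c^2)^2)⁻¹ := by
  set t := Real.sqrt (a^2+b^2+c^2) with hts
  have ht : 0 ≤ t := Real.sqrt_nonneg _
  have ht2 : t^2 = a^2+b^2+c^2 := Real.sq_sqrt hr.le
  have hb : |b| ≤ t := by
    rw [hts, ← Real.sqrt_sq_eq_abs]; exact Real.sqrt_le_sqrt (by nlinarith [sq_nonneg a, sq_nonneg c])
  have hq2 : 0 < (3*a^2-b^2-c^2)^2 := pow_two_pos_of_ne_zero hq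
  have hrpow : (a^2+b^2+c^2) ^ ((3:ℝ)/2) = t * (a^2+b^2+c^2) := by
    rw [show ((3:ℝ)/2) = 1/2 + 1 by norm_num, Real.rpow_add hr, Real.rpow_one, hts,
      Real.sqrt_eq_rpow]
  rw [hrpow, A2ZK, pZK, abs_div,
    abs_of_pos (show (0:ℝ) < 3*((a^2+b^2+c^2)*(3*a^2-b^2-c^2)^2) by positivity),
    div_le_iff₀ (by positivity)]
  have heq : 1000*(t*(a^2+b^2+c^2))*((3*a^2-b^2-c^2)^2)⁻¹*(3*((a^2+b^2+c^2)*(3*a^2-b^2-c^2)^2))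
      = 3000*t*(a^2+b^2+c^2)^2 := by
    rw [show 1000*(t*(a^2+b^2+c^2))*((3*a^2-b^2-c^2)^2)⁻¹*(3*((a^2+b^2+c^2)*(3*a^2-b^2-c^2)^2))
        = 3000*t*(a^2+b^2+c^2)^2 * (((3*a^2-b^2-c^2)^2)⁻¹ * (3*a^2-b^2-c^2)^2) by ring,
      inv_mul_cancel₀ hq2.ne', mul_one]
  rw [heq, abs_neg, abs_mul, abs_mul, abs_mul,
    abs_of_nonneg (show (0:ℝ) ≤ b^2+c^2 by positivity),
    abs_of_nonneg (show (0:ℝ) ≤ 3*a^2+b^2+c^2 by positivity),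
    show |(4:ℝ)| = 4 by norm_num]
  calc 4 * |b| * (b^2+c^2) * (3*a^2+b^2+c^2) ≤ 4*t*(a^2+b^2+c^2)*(3*(a^2+b^2+c^2)) := by
        gcongr <;> nlinarith [hb, sq_nonneg a, sq_nonneg b, sq_nonneg c]
    _ ≤ 3000*t*(a^2+b^2+c^2)^2 := by nlinarith [mul_nonneg ht (sq_nonneg (a^2+b^2+c^2))]

lemma polyA (a s : ℝ) (hs : 0 ≤ s) : 45*a^4 + 54*a^2*s + s^2 ≤ 64*(a^2+s)^2 := by
  nlinarith [sq_nonneg a, mul_nonneg (sq_nonneg a) hs, sq_nonneg s]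

lemma polyB (a s : ℝ) (hs : 0 ≤ s) : 9*a^4 + 18*a^2*s + s^2 ≤ 28*(a^2+s)^2 := by
  nlinarith [sq_nonneg a, mul_nonneg (sq_nonneg a) hs, sq_nonneg s]

lemma polyB2 (A B K : ℝ) (hA : 0 ≤ A) (hB : 0 ≤ B) (hK : 0 ≤ K) :
    4*(B+K)*(3*A+B+K) + 8*B*(3*A+B+K) + 8*B*(B+K) ≤ 44*(A+B+K)^2 := by
  nlinarith [mul_nonneg hA hB, mul_nonneg hA hK, mul_nonneg hB hK, sq_nonneg A,
    sq_nonneg B, sq_nonneg K]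

lemma polyC (R U T : ℝ) (hR : 0 ≤ R) (hU : 0 ≤ U) (hT : T^2 = R) :
    64*R^2*(3*(R*U^2)) + 28*T*R^2*(6*T*U^2 + 36*T*R*U)
      ≤ 9000*R^3*U^2 + 9000*R^4*U := by
  have h1 : 28*T*R^2*(6*T*U^2 + 36*T*R*U) = 168*T^2*R^2*U^2 + 1008*T^2*R^3*U := by ring
  rw [h1, hT]
  nlinarith [mul_nonneg (mul_nonneg hR (mul_nonneg hR hR)) (mul_nonneg hU hU),
    mul_nonneg (mul_nonneg (mul_nonneg hR hR) (mul_nonneg hR hR)) hU]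

lemma polyC2 (R U T : ℝ) (hR : 0 ≤ R) (hU : 0 ≤ U) (hT : T^2 = R) :
    44*R^2*(3*(R*U^2)) + 12*T*R^2*(6*T*U^2 + 12*T*R*U)
      ≤ 9000*R^3*U^2 + 9000*R^4*U := by
  have h1 : 12*T*R^2*(6*T*U^2 + 12*T*R*U) = 72*T^2*R^2*U^2 + 144*T^2*R^3*U := by ring
  rw [h1, hT]
  nlinarith [mul_nonneg (mul_nonneg hR (mul_nonneg hR hR)) (mul_nonneg hU hU),
    mul_nonneg (mul_nonneg (mul_nonneg hR hR) (mul_nonneg hR hR)) hU]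

set_option maxHeartbeats 1000000 in
lemma aux_dA1 (a b c : ℝ) (hr : 0 < a^2+b^2+c^2) (hq : 3*a^2-b^2-c^2 ≠ 0) :
    |deriv (fun s => A1ZK s b c) a|
      ≤ 1000 * ((a^2+b^2+c^2) * ((3*a^2-b^2-c^2)^2)⁻¹
          + (a^2+b^2+c^2)^2 * (|3*a^2-b^2-c^2|^3)⁻¹) := by
  rw [(hasDerivAt_A1aux b c a hr hq).deriv]
  set t := Real.sqrt (a^2+b^2+c^2) with hts
  have ht : 0 ≤ t := Real.sqrt_nonneg _
  have ht2 : t^2 = a^2+b^2+c^2 := Real.sq_sqrt hr.le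
  have ha : |a| ≤ t := by
    rw [hts, ← Real.sqrt_sq_eq_abs]
    exact Real.sqrt_le_sqrt (by nlinarith [sq_nonneg b, sq_nonneg c])
  set u := |3*a^2-b^2-c^2| with hu_def
  have hu : 0 < u := abs_pos.2 hq
  have hq4 : (3*a^2-b^2-c^2)^2 = u^2 := by rw [hu_def, sq_abs]
  have hq2 : 0 < (3*a^2-b^2-c^2)^2 := pow_two_pos_of_ne_zero hq
  have hGpos : 0 < 3*((a^2+b^2+c^2)*(3*a^2-b^2-c^2)^2) :=
    mul_pos (by norm_num) (mul_pos hr hq2)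
  have hGabs2 : |(3*((a^2+b^2+c^2)*(3*a^2-b^2-c^2)^2))^2|
      = (3*((a^2+b^2+c^2)*(3*a^2-b^2-c^2)^2))^2 := abs_of_nonneg (sq_nonneg _)
  rw [abs_div, hGabs2, div_le_iff₀ (pow_pos hGpos 2), hq4]
  have heq : 1000 * ((a^2+b^2+c^2) * (u^2)⁻¹ + (a^2+b^2+c^2)^2 * (u^3)⁻¹)
        * (3*((a^2+b^2+c^2)*u^2))^2
      = 9000*(a^2+b^2+c^2)^3*u^2 + 9000*(a^2+b^2+c^2)^4*u := by
    field_simp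
    ring
  rw [heq]
  set F1 := -((9*a^4 + 18*a^2*(b^2+c^2) + (b^2+c^2)^2) + a*(36*a^3 + 36*a*(b^2+c^2))) with hF1
  set G1 := 3*((a^2+b^2+c^2)*u^2) with hG1
  set F2 := -(a * (9*a^4 + 18*a^2*(b^2+c^2) + (b^2+c^2)^2)) with hF2
  set G2 := 3*(2*a*u^2 + (a^2+b^2+c^2)*(2*(3*a^2-b^2-c^2)*(6*a))) with hG2
  have hFP : |F1| ≤ 64*(a^2+b^2+c^2)^2 := by
    rw [hF1, show -((9*a^4 + 18*a^2*(b^2+c^2) + (b^2+c^2)^2) + a*(36*a^3 + 36*a*(b^2+c^2)))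
        = -(45*a^4 + 54*a^2*(b^2+c^2) + (b^2+c^2)^2) from by ring, abs_neg,
      abs_of_nonneg (by positivity)]
    calc 45*a^4 + 54*a^2*(b^2+c^2) + (b^2+c^2)^2 ≤ 64*(a^2+(b^2+c^2))^2 :=
          polyA a (b^2+c^2) (by positivity)
      _ = 64*(a^2+b^2+c^2)^2 := by ring
  have hGeq : |G1| = 3*((a^2+b^2+c^2)*u^2) := by
    rw [hG1]; exact abs_of_nonneg (by positivity)
  have hF : |F2| ≤ 28*t*(a^2+b^2+c^2)^2 := by
    rw [hF2, abs_neg, abs_mul, abs_of_nonneg (show (0:ℝ) ≤ 9*a^4 + 18*a^2*(b^2+c^2) + (b^2+c^2)^2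
      by positivity)]
    have hN : 9*a^4 + 18*a^2*(b^2+c^2) + (b^2+c^2)^2 ≤ 28*(a^2+b^2+c^2)^2 := by
      calc 9*a^4 + 18*a^2*(b^2+c^2) + (b^2+c^2)^2 ≤ 28*(a^2+(b^2+c^2))^2 :=
            polyB a (b^2+c^2) (by positivity)
        _ = 28*(a^2+b^2+c^2)^2 := by ring
    calc |a| * (9*a^4 + 18*a^2*(b^2+c^2) + (b^2+c^2)^2) ≤ t * (28*(a^2+b^2+c^2)^2) :=
          mul_le_mul ha hN (by positivity) ht
      _ = 28*t*(a^2+b^2+c^2)^2 := by ring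
  have hGP : |G2| ≤ 6*t*u^2 + 36*t*(a^2+b^2+c^2)*u := by
    rw [hG2, show 3*(2*a*u^2 + (a^2+b^2+c^2)*(2*(3*a^2-b^2-c^2)*(6*a)))
        = 6*a*u^2 + 36*a*(a^2+b^2+c^2)*(3*a^2-b^2-c^2) from by ring]
    refine (abs_add_le _ _).trans (add_le_add ?_ ?_)
    · rw [abs_mul, abs_mul, show |(6:ℝ)| = 6 from by norm_num,
        abs_of_nonneg (sq_nonneg u)]
      exact mul_le_mul_of_nonneg_right (by linarith) (sq_nonneg u)
    · rw [abs_mul, abs_mul, abs_mul, show |(36:ℝ)| = 36 from by norm_num,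
        abs_of_nonneg hr.le, ← hu_def]
      exact mul_le_mul_of_nonneg_right
        (mul_le_mul_of_nonneg_right (by linarith) hr.le) hu.le
  have tri : |F1 * G1 - F2 * G2| ≤ |F1| * |G1| + |F2| * |G2| := by
    refine (abs_sub _ _).trans ?_
    rw [abs_mul F1 G1, abs_mul F2 G2]
  refine tri.trans ?_
  calc |F1| * |G1| + |F2| * |G2|
      ≤ 64*(a^2+b^2+c^2)^2 * (3*((a^2+b^2+c^2)*u^2))
        + 28*t*(a^2+b^2+c^2)^2 * (6*t*u^2 + 36*t*(a^2+b^2+c^2)*u) := by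
        refine add_le_add (mul_le_mul hFP (le_of_eq hGeq) (abs_nonneg _) (by positivity)) ?_
        refine mul_le_mul hF hGP (abs_nonneg _) ?_
        have : (0:ℝ) ≤ 28*t := by linarith
        positivity
    _ ≤ 9000*(a^2+b^2+c^2)^3*u^2 + 9000*(a^2+b^2+c^2)^4*u :=
        polyC (a^2+b^2+c^2) u t hr.le hu.le ht2

set_option maxHeartbeats 1000000 in
lemma aux_dA2 (a b c : ℝ) (hr : 0 < a^2+b^2+c^2) (hq : 3*a^2-b^2-c^2 ≠ 0) :
    |deriv (fun s => A2ZK a s c) b|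
      ≤ 1000 * ((a^2+b^2+c^2) * ((3*a^2-b^2-c^2)^2)⁻¹
          + (a^2+b^2+c^2)^2 * (|3*a^2-b^2-c^2|^3)⁻¹) := by
  rw [(hasDerivAt_A2aux a c b hr hq).deriv]
  set t := Real.sqrt (a^2+b^2+c^2) with hts
  have ht : 0 ≤ t := Real.sqrt_nonneg _
  have ht2 : t^2 = a^2+b^2+c^2 := Real.sq_sqrt hr.le
  have hb : |b| ≤ t := by
    rw [hts, ← Real.sqrt_sq_eq_abs]
    exact Real.sqrt_le_sqrt (by nlinarith [sq_nonneg a, sq_nonneg c])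
  set u := |3*a^2-b^2-c^2| with hu_def
  have hu : 0 < u := abs_pos.2 hq
  have hq4 : (3*a^2-b^2-c^2)^2 = u^2 := by rw [hu_def, sq_abs]
  have hq2 : 0 < (3*a^2-b^2-c^2)^2 := pow_two_pos_of_ne_zero hq
  have hGpos : 0 < 3*((a^2+b^2+c^2)*(3*a^2-b^2-c^2)^2) :=
    mul_pos (by norm_num) (mul_pos hr hq2)
  have hGabs2 : |(3*((a^2+b^2+c^2)*(3*a^2-b^2-c^2)^2))^2|
      = (3*((a^2+b^2+c^2)*(3*a^2-b^2-c^2)^2))^2 := abs_of_nonneg (sq_nonneg _)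
  rw [abs_div, hGabs2, div_le_iff₀ (pow_pos hGpos 2), hq4]
  have heq : 1000 * ((a^2+b^2+c^2) * (u^2)⁻¹ + (a^2+b^2+c^2)^2 * (u^3)⁻¹)
        * (3*((a^2+b^2+c^2)*u^2))^2
      = 9000*(a^2+b^2+c^2)^3*u^2 + 9000*(a^2+b^2+c^2)^4*u := by
    field_simp
    ring
  rw [heq]
  set F1 := -((4*(b^2+c^2) + 4*b*(2*b))*(3*a^2+b^2+c^2) + 4*b*(b^2+c^2)*(2*b)) with hF1
  set G1 := 3*((a^2+b^2+c^2)*u^2) with hG1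
  set F2 := -(4*b*(b^2+c^2)*(3*a^2+b^2+c^2)) with hF2
  set G2 := 3*(2*b*u^2 + (a^2+b^2+c^2)*(2*(3*a^2-b^2-c^2)*(-(2*b)))) with hG2
  have hFP : |F1| ≤ 44*(a^2+b^2+c^2)^2 := by
    rw [hF1, show -((4*(b^2+c^2) + 4*b*(2*b))*(3*a^2+b^2+c^2) + 4*b*(b^2+c^2)*(2*b))
        = -(4*(b^2+c^2)*(3*a^2+b^2+c^2) + 8*b^2*(3*a^2+b^2+c^2) + 8*b^2*(b^2+c^2))
        from by ring, abs_neg, abs_of_nonneg (by positivity)]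
    exact polyB2 (a^2) (b^2) (c^2) (sq_nonneg a) (sq_nonneg b) (sq_nonneg c)
  have hGeq : |G1| = 3*((a^2+b^2+c^2)*u^2) := by
    rw [hG1]; exact abs_of_nonneg (by positivity)
  have hF : |F2| ≤ 12*t*(a^2+b^2+c^2)^2 := by
    rw [hF2, abs_neg, abs_mul, abs_mul, abs_mul, show |(4:ℝ)| = 4 from by norm_num,
      abs_of_nonneg (show (0:ℝ) ≤ b^2+c^2 by positivity),
      abs_of_nonneg (show (0:ℝ) ≤ 3*a^2+b^2+c^2 by positivity)]
    calc 4 * |b| * (b^2+c^2) * (3*a^2+b^2+c^2)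
        ≤ 4 * t * (a^2+b^2+c^2) * (3*(a^2+b^2+c^2)) := by
          gcongr <;> nlinarith [hb, sq_nonneg a, sq_nonneg b, sq_nonneg c]
      _ = 12*t*(a^2+b^2+c^2)^2 := by ring
  have hGP : |G2| ≤ 6*t*u^2 + 12*t*(a^2+b^2+c^2)*u := by
    rw [hG2, show 3*(2*b*u^2 + (a^2+b^2+c^2)*(2*(3*a^2-b^2-c^2)*(-(2*b))))
        = 6*b*u^2 - 12*b*(a^2+b^2+c^2)*(3*a^2-b^2-c^2) from by ring]
    refine (abs_sub _ _).trans (add_le_add ?_ ?_)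
    · rw [abs_mul, abs_mul, show |(6:ℝ)| = 6 from by norm_num,
        abs_of_nonneg (sq_nonneg u)]
      exact mul_le_mul_of_nonneg_right (by linarith) (sq_nonneg u)
    · rw [abs_mul, abs_mul, abs_mul, show |(12:ℝ)| = 12 from by norm_num,
        abs_of_nonneg hr.le, ← hu_def]
      exact mul_le_mul_of_nonneg_right
        (mul_le_mul_of_nonneg_right (by linarith) hr.le) hu.le
  have tri : |F1 * G1 - F2 * G2| ≤ |F1| * |G1| + |F2| * |G2| := by
    refine (abs_sub _ _).trans ?_
    rw [abs_mul F1 G1, abs_mul F2 G2]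
  refine tri.trans ?_
  calc |F1| * |G1| + |F2| * |G2|
      ≤ 44*(a^2+b^2+c^2)^2 * (3*((a^2+b^2+c^2)*u^2))
        + 12*t*(a^2+b^2+c^2)^2 * (6*t*u^2 + 12*t*(a^2+b^2+c^2)*u) := by
        refine add_le_add (mul_le_mul hFP (le_of_eq hGeq) (abs_nonneg _) (by positivity)) ?_
        refine mul_le_mul hF hGP (abs_nonneg _) ?_
        have : (0:ℝ) ≤ 12*t := by linarith
        positivity
    _ ≤ 9000*(a^2+b^2+c^2)^3*u^2 + 9000*(a^2+b^2+c^2)^4*u :=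
        polyC2 (a^2+b^2+c^2) u t hr.le hu.le ht2

/-- Bounds on A_j and on the partial derivatives ∂_{η_j}A_j, j = 1,2,3. -/
theorem Aj_bounds :
    ∃ C > 0, ∀ η₁ η₂ η₃ : ℝ, ¬(η₁ = 0 ∧ η₂ = 0 ∧ η₃ = 0) →
      3 * η₁ ^ 2 ≠ η₂ ^ 2 + η₃ ^ 2 →
      (|A1ZK η₁ η₂ η₃|
          ≤ C * (η₁ ^ 2 + η₂ ^ 2 + η₃ ^ 2) ^ ((3 : ℝ) / 2)
              * ((3 * η₁ ^ 2 - η₂ ^ 2 - η₃ ^ 2) ^ 2)⁻¹) ∧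
      (|A2ZK η₁ η₂ η₃|
          ≤ C * (η₁ ^ 2 + η₂ ^ 2 + η₃ ^ 2) ^ ((3 : ℝ) / 2)
              * ((3 * η₁ ^ 2 - η₂ ^ 2 - η₃ ^ 2) ^ 2)⁻¹) ∧
      (|A3ZK η₁ η₂ η₃|
          ≤ C * (η₁ ^ 2 + η₂ ^ 2 + η₃ ^ 2) ^ ((3 : ℝ) / 2)
              * ((3 * η₁ ^ 2 - η₂ ^ 2 - η₃ ^ 2) ^ 2)⁻¹) ∧
      (|deriv (fun s => A1ZK s η₂ η₃) η₁|
          ≤ C * ((η₁ ^ 2 + η₂ ^ 2 + η₃ ^ 2) * ((3 * η₁ ^ 2 - η₂ ^ 2 - η₃ ^ 2) ^ 2)⁻¹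
              + (η₁ ^ 2 + η₂ ^ 2 + η₃ ^ 2) ^ 2 * (|3 * η₁ ^ 2 - η₂ ^ 2 - η₃ ^ 2| ^ 3)⁻¹)) ∧
      (|deriv (fun s => A2ZK η₁ s η₃) η₂|
          ≤ C * ((η₁ ^ 2 + η₂ ^ 2 + η₃ ^ 2) * ((3 * η₁ ^ 2 - η₂ ^ 2 - η₃ ^ 2) ^ 2)⁻¹
              + (η₁ ^ 2 + η₂ ^ 2 + η₃ ^ 2) ^ 2 * (|3 * η₁ ^ 2 - η₂ ^ 2 - η₃ ^ 2| ^ 3)⁻¹)) ∧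
      (|deriv (fun s => A3ZK η₁ η₂ s) η₃|
          ≤ C * ((η₁ ^ 2 + η₂ ^ 2 + η₃ ^ 2) * ((3 * η₁ ^ 2 - η₂ ^ 2 - η₃ ^ 2) ^ 2)⁻¹
              + (η₁ ^ 2 + η₂ ^ 2 + η₃ ^ 2) ^ 2 * (|3 * η₁ ^ 2 - η₂ ^ 2 - η₃ ^ 2| ^ 3)⁻¹)) := by
  refine ⟨1000, by norm_num, fun η₁ η₂ η₃ hη hq => ?_⟩
  have hr : 0 < η₁^2 + η₂^2 + η₃^2 := by
    by_contra h
    push_neg at h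
    have h1 : η₁^2 = 0 := le_antisymm (by nlinarith [sq_nonneg η₂, sq_nonneg η₃]) (sq_nonneg η₁)
    have h2 : η₂^2 = 0 := le_antisymm (by nlinarith [sq_nonneg η₁, sq_nonneg η₃]) (sq_nonneg η₂)
    have h3 : η₃^2 = 0 := le_antisymm (by nlinarith [sq_nonneg η₁, sq_nonneg η₂]) (sq_nonneg η₃)
    exact hη ⟨pow_eq_zero_iff two_ne_zero |>.mp h1, pow_eq_zero_iff two_ne_zero |>.mp h2,
      pow_eq_zero_iff two_ne_zero |>.mp h3⟩
  have hqne : 3*η₁^2 - η₂^2 - η₃^2 ≠ 0 := fun h => hq (by linarith)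
  have hr' : 0 < η₁^2 + η₃^2 + η₂^2 := by linarith
  have hqne' : 3*η₁^2 - η₃^2 - η₂^2 ≠ 0 := fun h => hqne (by linarith)
  have e2 : η₁^2 + η₂^2 + η₃^2 = η₁^2 + η₃^2 + η₂^2 := by ring
  have e3 : 3*η₁^2 - η₂^2 - η₃^2 = 3*η₁^2 - η₃^2 - η₂^2 := by ring
  refine ⟨aux_absA1 η₁ η₂ η₃ hr hqne, aux_absA2 η₁ η₂ η₃ hr hqne, ?_,
    aux_dA1 η₁ η₂ η₃ hr hqne, aux_dA2 η₁ η₂ η₃ hr hqne, ?_⟩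
  · have e1 : A3ZK η₁ η₂ η₃ = A2ZK η₁ η₃ η₂ := by unfold A3ZK A2ZK pZK; ring
    rw [e1, e2, e3]
    exact aux_absA2 η₁ η₃ η₂ hr' hqne'
  · have e1 : (fun s => A3ZK η₁ η₂ s) = (fun s => A2ZK η₁ s η₂) :=
      funext fun s => by unfold A3ZK A2ZK pZK; ring
    rw [e1, e2, e3]
    exact aux_dA2 η₁ η₃ η₂ hr' hqne'
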